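/- For every partition λ ⊢ n and every standard Young tableau T of shape λ, the corresponding eigenvalue is bounded by those of the special tableaux: eig(T_λ^↓) ≤ eig(T) ≤ eig(T_λ^→). -/

import Mathlib

open scoped BigOperators

/-- The eigenvalue statistic of a tableau-filling `T` of the Young diagram `μ`:
`eig(T) = (1/n) ∑_{(i,j)∈μ} (j-i+1)/T(i,j)` (cells are 0-indexed, which leaves
the quantity `j-i+1` unchanged). -/
noncomputable def eig (μ : YoungDiagram) (T : ℕ × ℕ → ℕ) : ℝ :=
  (μ.card : ℝ)⁻¹ * ∑ c ∈ μ.cells, (((c.2 : ℝ) - (c.1 : ℝ) + 1) / (T c : ℝ))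

/-- `T` is a Young tableau of shape `μ`: a bijection from the cells of `μ` onto `{1,…,n}`. -/
def IsYT (μ : YoungDiagram) (T : ℕ × ℕ → ℕ) : Prop :=
  Set.BijOn T (μ.cells : Set (ℕ × ℕ)) (Finset.Icc 1 μ.card : Set ℕ)

/-- `T` is a standard Young tableau of shape `μ`: a Young tableau whose entries increase
along rows and down columns. -/
def IsSYT (μ : YoungDiagram) (T : ℕ × ℕ → ℕ) : Prop :=
  IsYT μ T ∧
    (∀ i j₁ j₂ : ℕ, (i, j₁) ∈ μ → (i, j₂) ∈ μ → j₁ < j₂ → T (i, j₁) < T (i, j₂)) ∧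
    (∀ i₁ i₂ j : ℕ, (i₁, j) ∈ μ → (i₂, j) ∈ μ → i₁ < i₂ → T (i₁, j) < T (i₂, j))

/-- The row-reading tableau `T_λ^→`: entries `1,…,n` inserted along rows, left to right,
top row first.  The value at a cell is its (1-indexed) rank in row-major order. -/
def rowTab (μ : YoungDiagram) : ℕ × ℕ → ℕ := fun c =>
  (μ.cells.filter (fun c' => c'.1 < c.1 ∨ (c'.1 = c.1 ∧ c'.2 ≤ c.2))).card

/-- The column-reading tableau `T_λ^↓`: entries `1,…,n` inserted down columns, top to bottom,
leftmost column first. -/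
def colTab (μ : YoungDiagram) : ℕ × ℕ → ℕ := fun c =>
  (μ.cells.filter (fun c' => c'.2 < c.2 ∨ (c'.2 = c.2 ∧ c'.1 ≤ c.1))).card


namespace EigAux
open Finset


/-- Summation-by-parts positivity. -/
lemma abel_nonneg (N : ℕ) (d c : ℕ → ℝ)
    (hd : ∀ k, k ≤ N → 0 ≤ ∑ i ∈ range k, d i)
    (hdN : ∑ i ∈ range N, d i = 0)
    (hc : ∀ i, i + 1 < N → c (i + 1) ≤ c i) :
    0 ≤ ∑ i ∈ range N, d i * c i := by
  have h := Finset.sum_range_by_parts (fun i => c i) (fun i => d i) N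
  simp only [smul_eq_mul] at h
  have hcomm : ∑ i ∈ range N, d i * c i = ∑ i ∈ range N, c i * d i := by
    simp [mul_comm]
  rw [hcomm, h, hdN, mul_zero, zero_sub, neg_nonneg]
  apply Finset.sum_nonpos
  intro i hi
  rw [mem_range] at hi
  have h1 : c (i + 1) - c i ≤ 0 := by
    have := hc i (by omega); linarith
  have h2 : 0 ≤ ∑ j ∈ range (i + 1), d j := hd (i + 1) (by omega)
  exact mul_nonpos_of_nonpos_of_nonneg h1 h2

/-- A down-closed finset of naturals is an initial range. -/
lemma downclosed_eq_range (J : Finset ℕ) (h : ∀ j ∈ J, ∀ j' ≤ j, j' ∈ J) :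
    J = range J.card := by
  have hsub : J ⊆ range J.card := by
    intro x hx
    rw [mem_range]
    have hss : range (x + 1) ⊆ J := by
      intro y hy
      rw [mem_range] at hy
      exact h x hx y (by omega)
    have := Finset.card_le_card hss
    simpa using this
  exact Finset.eq_of_subset_of_card_le hsub (by simp)

/-- row counts of a finite cell set -/
def rc (S : Finset (ℕ × ℕ)) (i : ℕ) : ℕ := (S.filter (fun c => c.1 = i)).card

lemma image_snd_filter_eq (S : Finset (ℕ × ℕ))
    (hl : ∀ i j j', (i, j) ∈ S → j' ≤ j → (i, j') ∈ S) (i : ℕ) :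
    (S.filter (fun c => c.1 = i)).image Prod.snd = range (rc S i) := by
  rw [rc, ← Finset.card_image_of_injOn (f := Prod.snd)]
  · apply downclosed_eq_range
    intro j hj j' hj'
    simp only [mem_image, mem_filter] at hj ⊢
    obtain ⟨⟨a, b⟩, ⟨hS, ha⟩, hb⟩ := hj
    simp only at ha hb
    subst ha; subst hb
    exact ⟨(a, j'), ⟨hl a b j' hS hj', rfl⟩, rfl⟩
  · intro ⟨a, b⟩ ha ⟨a', b'⟩ ha' hab
    simp only [mem_coe, mem_filter] at ha ha'
    simp only at hab
    exact Prod.ext (ha.2.trans ha'.2.symm) hab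

lemma mem_iff_lt_rc (S : Finset (ℕ × ℕ))
    (hl : ∀ i j j', (i, j) ∈ S → j' ≤ j → (i, j') ∈ S) (i j : ℕ) :
    (i, j) ∈ S ↔ j < rc S i := by
  have key := image_snd_filter_eq S hl i
  have : j ∈ (S.filter (fun c => c.1 = i)).image Prod.snd ↔ (i, j) ∈ S := by
    simp only [mem_image, mem_filter]
    constructor
    · rintro ⟨⟨a, b⟩, ⟨hS, ha⟩, hb⟩
      simp only at ha hb; subst ha; subst hb; exact hS
    · intro h; exact ⟨(i, j), ⟨h, rfl⟩, rfl⟩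
  rw [← this, key, mem_range]

lemma filter_row_eq (S : Finset (ℕ × ℕ))
    (hl : ∀ i j j', (i, j) ∈ S → j' ≤ j → (i, j') ∈ S) (i : ℕ) :
    S.filter (fun c => c.1 = i) = (range (rc S i)).image (fun j => (i, j)) := by
  ext ⟨a, b⟩
  simp only [mem_filter, mem_image, mem_range]
  constructor
  · rintro ⟨hS, rfl⟩
    exact ⟨b, (mem_iff_lt_rc S hl a b).mp hS, rfl⟩
  · rintro ⟨j, hj, hji⟩
    rw [Prod.ext_iff] at hji
    obtain ⟨h1, h2⟩ := hji
    simp only at h1 h2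
    subst h1; subst h2
    exact ⟨(mem_iff_lt_rc S hl _ _).mpr hj, rfl⟩

/-- Sum over a left-closed cell set, row by row. -/
lemma sum_rows (S : Finset (ℕ × ℕ)) (f : ℕ × ℕ → ℝ) (N : ℕ)
    (hN : ∀ c ∈ S, c.1 < N)
    (hl : ∀ i j j', (i, j) ∈ S → j' ≤ j → (i, j') ∈ S) :
    ∑ c ∈ S, f c = ∑ i ∈ range N, ∑ j ∈ range (rc S i), f (i, j) := by
  rw [← Finset.sum_fiberwise_of_maps_to (g := Prod.fst) (t := range N)
    (fun c hc => mem_range.mpr (hN c hc))]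
  apply Finset.sum_congr rfl
  intro i _
  rw [filter_row_eq S hl i, Finset.sum_image]
  intro a _ b _ hab
  exact (Prod.mk.inj hab).2

/-- Cardinality as sum of row counts. -/
lemma card_eq_sum_rc (S : Finset (ℕ × ℕ)) (N : ℕ) (hN : ∀ c ∈ S, c.1 < N) :
    S.card = ∑ i ∈ range N, rc S i :=
  Finset.card_eq_sum_card_fiberwise (fun c hc => mem_range.mpr (hN c hc))

/-- Partial sums of row counts are bounded by the cardinality. -/
lemma sum_rc_le_card (S : Finset (ℕ × ℕ)) (k : ℕ) :
    ∑ i ∈ range k, rc S i ≤ S.card := by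
  have h : ∑ i ∈ range k, rc S i = (S.filter (fun c => c.1 < k)).card := by
    rw [Finset.card_eq_sum_card_fiberwise
      (f := Prod.fst) (t := range k) (fun c hc => mem_range.mpr (mem_filter.mp hc).2)]
    apply Finset.sum_congr rfl
    intro i hi
    rw [mem_range] at hi
    rw [rc, Finset.filter_filter]
    congr 1
    apply Finset.filter_congr
    intro c _
    omega
  rw [h]
  exact Finset.card_le_card (filter_subset _ _)

/-- Row counts are antitone for up-closed sets. -/
lemma rc_anti (S : Finset (ℕ × ℕ))
    (hl : ∀ i j j', (i, j) ∈ S → j' ≤ j → (i, j') ∈ S)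
    (hu : ∀ i i' j, (i, j) ∈ S → i' ≤ i → (i', j) ∈ S) (i : ℕ) :
    rc S (i + 1) ≤ rc S i := by
  by_contra h
  push_neg at h
  have h1 : (i + 1, rc S i) ∈ S := (mem_iff_lt_rc S hl _ _).mpr h
  have h2 : (i, rc S i) ∈ S := hu _ _ _ h1 (by omega)
  have := (mem_iff_lt_rc S hl _ _).mp h2
  omega


def rowTab' (μ : YoungDiagram) : ℕ × ℕ → ℕ := fun c =>
  (μ.cells.filter (fun c' => c'.1 < c.1 ∨ (c'.1 = c.1 ∧ c'.2 ≤ c.2))).card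

/-- partial sums of row lengths -/
def P (μ : YoungDiagram) (k : ℕ) : ℕ := ∑ i ∈ range k, μ.rowLen i

lemma P_mono (μ : YoungDiagram) {k k' : ℕ} (h : k ≤ k') : P μ k ≤ P μ k' := by
  unfold P
  exact Finset.sum_le_sum_of_subset (by simp [range_subset, h]; intro x hx; omega)

lemma fst_lt_colLen (μ : YoungDiagram) {c : ℕ × ℕ} (hc : c ∈ μ.cells) :
    c.1 < μ.colLen 0 := by
  have h1 : c.1 < μ.colLen c.2 := by
    rw [← YoungDiagram.mem_iff_lt_colLen]
    simpa using hc
  exact lt_of_lt_of_le h1 (μ.colLen_anti 0 c.2 (Nat.zero_le _))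

lemma card_eq_P (μ : YoungDiagram) {N : ℕ} (hN : μ.colLen 0 ≤ N) :
    μ.card = P μ N := by
  show μ.cells.card = _
  rw [Finset.card_eq_sum_card_fiberwise
    (f := Prod.fst) (t := range N)
    (fun c hc => mem_range.mpr (lt_of_lt_of_le (fst_lt_colLen μ hc) hN))]
  apply Finset.sum_congr rfl
  intro i _
  rw [μ.rowLen_eq_card]
  rfl

lemma rowTab'_eq (μ : YoungDiagram) {i j : ℕ} (h : (i, j) ∈ μ) :
    rowTab' μ (i, j) = P μ i + j + 1 := by
  rw [rowTab']
  rw [Finset.card_eq_sum_card_fiberwise (f := Prod.fst) (t := range (i + 1))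
    (fun c hc => by
      rw [mem_coe, mem_range]
      have := (mem_filter.mp hc).2
      simp only at this
      omega)]
  rw [Finset.sum_range_succ]
  have h1 : ∀ i' ∈ range i,
      ((μ.cells.filter (fun c' => c'.1 < i ∨ (c'.1 = i ∧ c'.2 ≤ j))).filter
        (fun c => c.1 = i')).card = μ.rowLen i' := by
    intro i' hi'
    rw [mem_range] at hi'
    rw [Finset.filter_filter]
    have : μ.cells.filter (fun c => (c.1 < i ∨ (c.1 = i ∧ c.2 ≤ j)) ∧ c.1 = i')
        = μ.row i' := by
      rw [YoungDiagram.row]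
      apply Finset.filter_congr
      intro c _
      omega
    rw [this, ← μ.rowLen_eq_card]
  rw [Finset.sum_congr rfl h1]
  have h2 : ((μ.cells.filter (fun c' => c'.1 < i ∨ (c'.1 = i ∧ c'.2 ≤ j))).filter
      (fun c => c.1 = i)) = (range (j + 1)).image (fun b => (i, b)) := by
    rw [Finset.filter_filter]
    ext ⟨a, b⟩
    simp only [mem_filter, mem_image, mem_range, YoungDiagram.mem_cells]
    constructor
    · rintro ⟨hmem, hcond, rfl⟩
      exact ⟨b, by omega, rfl⟩
    · rintro ⟨b', hb', hbb⟩
      rw [Prod.ext_iff] at hbb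
      obtain ⟨h3, h4⟩ := hbb
      simp only at h3 h4
      subst h3; subst h4
      exact ⟨μ.up_left_mem le_rfl (by omega) h, Or.inr ⟨rfl, by omega⟩, rfl⟩
  rw [h2, Finset.card_image_of_injective _ (fun a b hab => (Prod.ext_iff.mp hab).2)]
  have hPP : (range i).sum μ.rowLen = P μ i := rfl
  rw [Finset.card_range, hPP]
  omega

lemma mem_rowSet_iff (μ : YoungDiagram) (m : ℕ) (i j : ℕ) :
    (i, j) ∈ μ.cells.filter (fun c => rowTab' μ c ≤ m) ↔
      ((i, j) ∈ μ ∧ P μ i + j + 1 ≤ m) := by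
  constructor
  · intro h
    rw [mem_filter] at h
    obtain ⟨h1, h2⟩ := h
    rw [YoungDiagram.mem_cells] at h1
    rw [rowTab'_eq μ h1] at h2
    exact ⟨h1, h2⟩
  · rintro ⟨h1, h2⟩
    rw [mem_filter, YoungDiagram.mem_cells]
    exact ⟨h1, by rw [rowTab'_eq μ h1]; exact h2⟩

lemma rowSet_left_closed (μ : YoungDiagram) (m : ℕ) :
    ∀ i j j', (i, j) ∈ μ.cells.filter (fun c => rowTab' μ c ≤ m) → j' ≤ j →
      (i, j') ∈ μ.cells.filter (fun c => rowTab' μ c ≤ m) := by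
  intro i j j' h hj'
  rw [mem_rowSet_iff] at h ⊢
  exact ⟨μ.up_left_mem le_rfl hj' h.1, by omega⟩

lemma rowSet_up_closed (μ : YoungDiagram) (m : ℕ) :
    ∀ i i' j, (i, j) ∈ μ.cells.filter (fun c => rowTab' μ c ≤ m) → i' ≤ i →
      (i', j) ∈ μ.cells.filter (fun c => rowTab' μ c ≤ m) := by
  intro i i' j h hi'
  rw [mem_rowSet_iff] at h ⊢
  have := P_mono μ hi'
  exact ⟨μ.up_left_mem hi' le_rfl h.1, by omega⟩

lemma nat_eq_of_lt_iff {a b : ℕ} (h : ∀ j, j < a ↔ j < b) : a = b := by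
  rcases lt_trichotomy a b with h' | h' | h'
  · have := (h a).mpr h'; omega
  · exact h'
  · have := (h b).mp h'; omega

lemma rc_rowSet (μ : YoungDiagram) (m : ℕ) (i : ℕ) :
    rc (μ.cells.filter (fun c => rowTab' μ c ≤ m)) i
      = min (μ.rowLen i) (m - P μ i) := by
  apply nat_eq_of_lt_iff
  intro j
  rw [← mem_iff_lt_rc _ (rowSet_left_closed μ m) i j, mem_rowSet_iff,
    YoungDiagram.mem_iff_lt_rowLen]
  omega

lemma sum_min_greedy (μ : YoungDiagram) (m : ℕ) (k : ℕ) :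
    ∑ i ∈ range k, min (μ.rowLen i) (m - P μ i) = min (P μ k) m := by
  induction k with
  | zero => simp [P]
  | succ k ih =>
    rw [Finset.sum_range_succ, ih]
    have hP : P μ (k + 1) = P μ k + μ.rowLen k := Finset.sum_range_succ _ _
    omega

lemma card_rowSet (μ : YoungDiagram) (m : ℕ) (hm : m ≤ μ.card) :
    (μ.cells.filter (fun c => rowTab' μ c ≤ m)).card = m := by
  rw [card_eq_sum_rc _ (μ.colLen 0)
    (fun c hc => fst_lt_colLen μ (mem_filter.mp hc).1)]
  rw [Finset.sum_congr rfl (fun i _ => rc_rowSet μ m i), sum_min_greedy]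
  have := card_eq_P μ (le_refl (μ.colLen 0))
  omega
lemma sum_range_cast (t : ℕ) : ∑ j ∈ range t, (j : ℝ) = t * (t - 1) / 2 := by
  induction t with
  | zero => simp
  | succ t ih => rw [Finset.sum_range_succ, ih]; push_cast; ring

lemma g_closed (t i : ℕ) :
    ∑ j ∈ range t, ((j : ℝ) - i + 1) = (t * (t + 1)) / 2 - t * i := by
  induction t with
  | zero => simp
  | succ t ih => rw [Finset.sum_range_succ, ih]; push_cast; ring

lemma h_closed (t i : ℕ) :
    ∑ j ∈ range t, ((i : ℝ) - j + 1) = t * (i + 1) - (t * (t - 1)) / 2 := by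
  induction t with
  | zero => simp
  | succ t ih => rw [Finset.sum_range_succ, ih]; push_cast; ring

lemma rc_le_rowLen (μ : YoungDiagram) (S : Finset (ℕ × ℕ)) (hS : S ⊆ μ.cells)
    (hl : ∀ i j j', (i, j) ∈ S → j' ≤ j → (i, j') ∈ S) (i : ℕ) :
    rc S i ≤ μ.rowLen i := by
  by_contra h
  push_neg at h
  have h1 : (i, μ.rowLen i) ∈ S := (mem_iff_lt_rc S hl _ _).mpr h
  have h2 : (i, μ.rowLen i) ∈ μ := hS h1
  rw [YoungDiagram.mem_iff_lt_rowLen] at h2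
  omega

section Core

variable (μ : YoungDiagram) (m : ℕ) (S : Finset (ℕ × ℕ))

/-- Shared setup facts for the core inequalities. -/
lemma core_sums (hm : m ≤ μ.card) (hS : S ⊆ μ.cells)
    (hl : ∀ i j j', (i, j) ∈ S → j' ≤ j → (i, j') ∈ S)
    (hcard : S.card = m) :
    (∀ k, ∑ i ∈ range k, rc S i
        ≤ ∑ i ∈ range k, rc (μ.cells.filter (fun c => rowTab' μ c ≤ m)) i) ∧
    (∑ i ∈ range (μ.colLen 0), rc S i
        = ∑ i ∈ range (μ.colLen 0), rc (μ.cells.filter (fun c => rowTab' μ c ≤ m)) i) := by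
  have hr : ∀ k, ∑ i ∈ range k, rc (μ.cells.filter (fun c => rowTab' μ c ≤ m)) i
      = min (P μ k) m := by
    intro k
    rw [Finset.sum_congr rfl (fun i _ => rc_rowSet μ m i), sum_min_greedy]
  have hsle : ∀ k, ∑ i ∈ range k, rc S i ≤ min (P μ k) m := by
    intro k
    refine le_min ?_ ?_
    · calc ∑ i ∈ range k, rc S i ≤ ∑ i ∈ range k, μ.rowLen i :=
            Finset.sum_le_sum (fun i _ => rc_le_rowLen μ S hS hl i)
        _ = P μ k := rfl
    · rw [← hcard]; exact sum_rc_le_card S k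
  constructor
  · intro k; rw [hr]; exact hsle k
  · rw [hr]
    have h1 : ∑ i ∈ range (μ.colLen 0), rc S i = S.card :=
      (card_eq_sum_rc S _ (fun c hc => fst_lt_colLen μ (hS hc))).symm
    have h2 : P μ (μ.colLen 0) = μ.card := (card_eq_P μ le_rfl).symm
    rw [h1, hcard]
    omega

lemma core_row_max (hm : m ≤ μ.card) (hS : S ⊆ μ.cells)
    (hl : ∀ i j j', (i, j) ∈ S → j' ≤ j → (i, j') ∈ S)
    (hu : ∀ i i' j, (i, j) ∈ S → i' ≤ i → (i', j) ∈ S)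
    (hcard : S.card = m) :
    ∑ c ∈ S, ((c.2 : ℝ) - c.1 + 1)
      ≤ ∑ c ∈ μ.cells.filter (fun c => rowTab' μ c ≤ m), ((c.2 : ℝ) - c.1 + 1) := by
  set N := μ.colLen 0 with hN
  set R := μ.cells.filter (fun c => rowTab' μ c ≤ m) with hR
  have hRsub : R ⊆ μ.cells := filter_subset _ _
  have hRl := rowSet_left_closed μ m
  have hRu := rowSet_up_closed μ m
  obtain ⟨hps, htot⟩ := core_sums μ m S hm hS hl hcard
  have hLHS := sum_rows S (fun c => ((c.2 : ℝ) - c.1 + 1)) N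
    (fun c hc => fst_lt_colLen μ (hS hc)) hl
  have hRHS := sum_rows R (fun c => ((c.2 : ℝ) - c.1 + 1)) N
    (fun c hc => fst_lt_colLen μ (hRsub hc)) hRl
  rw [hLHS, hRHS]
  have habel := abel_nonneg N (fun i => (rc R i : ℝ) - rc S i)
      (fun i => ((rc R i : ℝ) + rc S i + 1) / 2 - i)
      (fun k _ => by
        rw [Finset.sum_sub_distrib, sub_nonneg, ← Nat.cast_sum, ← Nat.cast_sum,
          Nat.cast_le]
        exact hps k)
      (by
        rw [Finset.sum_sub_distrib, sub_eq_zero, ← Nat.cast_sum, ← Nat.cast_sum,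
          Nat.cast_inj]
        exact htot.symm)
      (fun i _ => by
        have h1 := rc_anti R hRl hRu i
        have h2 := rc_anti S hl hu i
        have c1 : (rc R (i + 1) : ℝ) ≤ rc R i := Nat.cast_le.mpr h1
        have c2 : (rc S (i + 1) : ℝ) ≤ rc S i := Nat.cast_le.mpr h2
        push_cast
        linarith)
  have hdiff : ∑ i ∈ range N, (∑ j ∈ range (rc R i), ((j : ℝ) - i + 1))
      - ∑ i ∈ range N, (∑ j ∈ range (rc S i), ((j : ℝ) - i + 1))
      = ∑ i ∈ range N, ((rc R i : ℝ) - rc S i)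
          * (((rc R i : ℝ) + rc S i + 1) / 2 - i) := by
    rw [← Finset.sum_sub_distrib]
    apply Finset.sum_congr rfl
    intro i _
    rw [g_closed, g_closed]
    ring
  linarith [habel, hdiff.symm.le, hdiff.le]

lemma core_row_min (hm : m ≤ μ.card) (hS : S ⊆ μ.cells)
    (hl : ∀ i j j', (i, j) ∈ S → j' ≤ j → (i, j') ∈ S)
    (hu : ∀ i i' j, (i, j) ∈ S → i' ≤ i → (i', j) ∈ S)
    (hcard : S.card = m) :
    ∑ c ∈ μ.cells.filter (fun c => rowTab' μ c ≤ m), ((c.1 : ℝ) - c.2 + 1)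
      ≤ ∑ c ∈ S, ((c.1 : ℝ) - c.2 + 1) := by
  set N := μ.colLen 0 with hN
  set R := μ.cells.filter (fun c => rowTab' μ c ≤ m) with hR
  have hRsub : R ⊆ μ.cells := filter_subset _ _
  have hRl := rowSet_left_closed μ m
  have hRu := rowSet_up_closed μ m
  obtain ⟨hps, htot⟩ := core_sums μ m S hm hS hl hcard
  have hLHS := sum_rows S (fun c => ((c.1 : ℝ) - c.2 + 1)) N
    (fun c hc => fst_lt_colLen μ (hS hc)) hl
  have hRHS := sum_rows R (fun c => ((c.1 : ℝ) - c.2 + 1)) N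
    (fun c hc => fst_lt_colLen μ (hRsub hc)) hRl
  rw [hLHS, hRHS]
  have habel := abel_nonneg N (fun i => (rc R i : ℝ) - rc S i)
      (fun i => ((rc R i : ℝ) + rc S i - 1) / 2 - i - 1)
      (fun k _ => by
        rw [Finset.sum_sub_distrib, sub_nonneg, ← Nat.cast_sum, ← Nat.cast_sum,
          Nat.cast_le]
        exact hps k)
      (by
        rw [Finset.sum_sub_distrib, sub_eq_zero, ← Nat.cast_sum, ← Nat.cast_sum,
          Nat.cast_inj]
        exact htot.symm)
      (fun i _ => by
        have h1 := rc_anti R hRl hRu i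
        have h2 := rc_anti S hl hu i
        have c1 : (rc R (i + 1) : ℝ) ≤ rc R i := Nat.cast_le.mpr h1
        have c2 : (rc S (i + 1) : ℝ) ≤ rc S i := Nat.cast_le.mpr h2
        push_cast
        linarith)
  have hdiff : ∑ i ∈ range N, (∑ j ∈ range (rc S i), ((i : ℝ) - j + 1))
      - ∑ i ∈ range N, (∑ j ∈ range (rc R i), ((i : ℝ) - j + 1))
      = ∑ i ∈ range N, ((rc R i : ℝ) - rc S i)
          * (((rc R i : ℝ) + rc S i - 1) / 2 - i - 1) := by
    rw [← Finset.sum_sub_distrib]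
    apply Finset.sum_congr rfl
    intro i _
    rw [h_closed, h_closed]
    ring
  linarith [habel, hdiff.le]

end Core
def colTab' (μ : YoungDiagram) : ℕ × ℕ → ℕ := fun c =>
  (μ.cells.filter (fun c' => c'.2 < c.2 ∨ (c'.2 = c.2 ∧ c'.1 ≤ c.1))).card

lemma card_transpose (μ : YoungDiagram) : μ.transpose.card = μ.card := by
  apply Finset.card_bij (fun c _ => Prod.swap c)
  · intro c hc
    rw [YoungDiagram.mem_cells] at hc ⊢
    rw [YoungDiagram.mem_transpose] at hc
    exact hc
  · intro a _ b _ hab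
    exact Prod.swap_injective hab
  · intro c hc
    refine ⟨c.swap, ?_, by simp⟩
    rw [YoungDiagram.mem_cells, YoungDiagram.mem_transpose]
    simpa using hc

lemma colTab'_eq (μ : YoungDiagram) (c : ℕ × ℕ) :
    colTab' μ c = rowTab' μ.transpose c.swap := by
  rw [colTab', rowTab']
  apply Finset.card_bij (fun c' _ => Prod.swap c')
  · intro c' hc'
    rw [mem_filter] at hc' ⊢
    obtain ⟨h1, h2⟩ := hc'
    refine ⟨?_, ?_⟩
    · rw [YoungDiagram.mem_cells, YoungDiagram.mem_transpose]
      simpa using h1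
    · simpa using h2
  · intro a _ b _ hab
    exact Prod.swap_injective hab
  · intro c'' hc''
    refine ⟨c''.swap, ?_, by simp⟩
    rw [mem_filter] at hc'' ⊢
    obtain ⟨h1, h2⟩ := hc''
    rw [YoungDiagram.mem_cells, YoungDiagram.mem_transpose] at h1
    refine ⟨by simpa using h1, by simpa using h2⟩

lemma mem_image_swap (S : Finset (ℕ × ℕ)) (a b : ℕ) :
    (a, b) ∈ S.image Prod.swap ↔ (b, a) ∈ S := by
  simp only [mem_image]
  constructor
  · rintro ⟨⟨x, y⟩, hxy, hs⟩
    rw [Prod.ext_iff] at hs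
    simp only [Prod.swap_prod_mk, Prod.fst, Prod.snd] at hs
    obtain ⟨h1, h2⟩ := hs
    subst h1; subst h2
    exact hxy
  · intro h
    exact ⟨(b, a), h, rfl⟩

lemma sum_image_swap (S : Finset (ℕ × ℕ)) (f : ℕ × ℕ → ℝ) :
    ∑ c ∈ S.image Prod.swap, f c = ∑ c ∈ S, f c.swap := by
  rw [Finset.sum_image]
  intro a _ b _ hab
  exact Prod.swap_injective hab

lemma image_swap_colSet (μ : YoungDiagram) (m : ℕ) :
    (μ.cells.filter (fun c => colTab' μ c ≤ m)).image Prod.swap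
      = μ.transpose.cells.filter (fun c => rowTab' μ.transpose c ≤ m) := by
  ext ⟨a, b⟩
  rw [mem_image_swap, mem_filter, mem_filter]
  rw [YoungDiagram.mem_cells, YoungDiagram.mem_cells, YoungDiagram.mem_transpose]
  constructor
  · rintro ⟨h1, h2⟩
    rw [colTab'_eq] at h2
    exact ⟨by simpa using h1, by simpa using h2⟩
  · rintro ⟨h1, h2⟩
    refine ⟨by simpa using h1, ?_⟩
    rw [colTab'_eq]
    simpa using h2

lemma core_col_min (μ : YoungDiagram) (m : ℕ) (S : Finset (ℕ × ℕ))
    (hm : m ≤ μ.card) (hS : S ⊆ μ.cells)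
    (hl : ∀ i j j', (i, j) ∈ S → j' ≤ j → (i, j') ∈ S)
    (hu : ∀ i i' j, (i, j) ∈ S → i' ≤ i → (i', j) ∈ S)
    (hcard : S.card = m) :
    ∑ c ∈ μ.cells.filter (fun c => colTab' μ c ≤ m), ((c.2 : ℝ) - c.1 + 1)
      ≤ ∑ c ∈ S, ((c.2 : ℝ) - c.1 + 1) := by
  have hLHS : ∑ c ∈ μ.cells.filter (fun c => colTab' μ c ≤ m), ((c.2 : ℝ) - c.1 + 1)
      = ∑ c ∈ μ.transpose.cells.filter (fun c => rowTab' μ.transpose c ≤ m),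
          ((c.1 : ℝ) - c.2 + 1) := by
    rw [← image_swap_colSet, sum_image_swap]
    apply Finset.sum_congr rfl
    intro c _
    simp
  have hRHS : ∑ c ∈ S, ((c.2 : ℝ) - c.1 + 1)
      = ∑ c ∈ S.image Prod.swap, ((c.1 : ℝ) - c.2 + 1) := by
    rw [sum_image_swap]
    apply Finset.sum_congr rfl
    intro c _
    simp
  rw [hLHS, hRHS]
  apply core_row_min μ.transpose m (S.image Prod.swap)
  · rw [card_transpose]; exact hm
  · intro c hc
    obtain ⟨a, b⟩ := c
    rw [mem_image_swap] at hc
    rw [YoungDiagram.mem_cells, YoungDiagram.mem_transpose]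
    exact hS hc
  · intro i j j' h hj'
    rw [mem_image_swap] at h ⊢
    exact hu j j' i h hj'
  · intro i i' j h hi'
    rw [mem_image_swap] at h ⊢
    exact hl j i i' h hi'
  · rw [Finset.card_image_of_injective _ Prod.swap_injective]
    exact hcard
noncomputable def w (n : ℕ) : ℕ → ℝ := fun m =>
  if m < n then 1 / (m : ℝ) - 1 / ((m : ℝ) + 1) else 1 / (n : ℝ)

lemma w_nonneg (n m : ℕ) (hm : 1 ≤ m) : 0 ≤ w n m := by
  rw [w]
  split
  · have h1 : (0 : ℝ) < m := by exact_mod_cast hm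
    have h2 : (m : ℝ) ≤ (m : ℝ) + 1 := by linarith
    have := one_div_le_one_div_of_le h1 h2
    linarith
  · positivity

lemma sum_w (n k : ℕ) (h1 : 1 ≤ k) (h2 : k ≤ n) :
    ∑ m ∈ Icc k n, w n m = 1 / (k : ℝ) := by
  rw [← Finset.Ico_add_one_right_eq_Icc, Finset.sum_Ico_succ_top h2]
  have hw : ∀ m ∈ Ico k n, w n m
      = (fun m : ℕ => 1 / (m : ℝ)) m - (fun m : ℕ => 1 / (m : ℝ)) (m + 1) := by
    intro m hm
    rw [mem_Ico] at hm
    rw [w, if_pos hm.2]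
    push_cast
    ring
  rw [Finset.sum_congr rfl hw, Finset.sum_Ico_eq_sub _ h2,
    Finset.sum_range_sub' (fun m : ℕ => 1 / (m : ℝ)),
    Finset.sum_range_sub' (fun m : ℕ => 1 / (m : ℝ))]
  rw [w, if_neg (lt_irrefl n)]
  ring

lemma decomposition (μ : YoungDiagram) (T : ℕ × ℕ → ℕ)
    (hT : ∀ c ∈ μ.cells, 1 ≤ T c ∧ T c ≤ μ.card) :
    ∑ c ∈ μ.cells, ((c.2 : ℝ) - (c.1 : ℝ) + 1) / (T c : ℝ)
      = ∑ m ∈ Icc 1 μ.card, w μ.card m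
          * ∑ c ∈ μ.cells.filter (fun c => T c ≤ m), ((c.2 : ℝ) - (c.1 : ℝ) + 1) := by
  have step1 : ∀ c ∈ μ.cells, ((c.2 : ℝ) - (c.1 : ℝ) + 1) / (T c : ℝ)
      = ∑ m ∈ Icc 1 μ.card,
          (if T c ≤ m then w μ.card m * ((c.2 : ℝ) - (c.1 : ℝ) + 1) else 0) := by
    intro c hc
    obtain ⟨hc1, hc2⟩ := hT c hc
    have hIcc : Icc (T c) μ.card = (Icc 1 μ.card).filter (fun m => T c ≤ m) := by
      ext m
      rw [mem_filter, mem_Icc, mem_Icc]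
      omega
    calc ((c.2 : ℝ) - (c.1 : ℝ) + 1) / (T c : ℝ)
        = (∑ m ∈ Icc (T c) μ.card, w μ.card m) * ((c.2 : ℝ) - (c.1 : ℝ) + 1) := by
          rw [sum_w μ.card (T c) hc1 hc2]; ring
      _ = ∑ m ∈ Icc (T c) μ.card, w μ.card m * ((c.2 : ℝ) - (c.1 : ℝ) + 1) := by
          rw [Finset.sum_mul]
      _ = _ := by rw [hIcc, Finset.sum_filter]
  rw [Finset.sum_congr rfl step1, Finset.sum_comm]
  apply Finset.sum_congr rfl
  intro m _
  rw [Finset.sum_filter, Finset.mul_sum]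
  apply Finset.sum_congr rfl
  intro c _
  rw [mul_ite, mul_zero]

lemma rowTab'_bounds (μ : YoungDiagram) :
    ∀ c ∈ μ.cells, 1 ≤ rowTab' μ c ∧ rowTab' μ c ≤ μ.card := by
  rintro ⟨i, j⟩ hc
  rw [YoungDiagram.mem_cells] at hc
  rw [rowTab'_eq μ hc]
  refine ⟨by omega, ?_⟩
  have hj : j < μ.rowLen i := YoungDiagram.mem_iff_lt_rowLen.mp hc
  have h1 : P μ (i + 1) = P μ i + μ.rowLen i := Finset.sum_range_succ _ _
  have h2 : i + 1 ≤ μ.colLen 0 := by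
    have : ((i, j) : ℕ × ℕ) ∈ μ.cells := by rwa [YoungDiagram.mem_cells]
    exact fst_lt_colLen μ this
  have h3 : P μ (i + 1) ≤ P μ (μ.colLen 0) := P_mono μ h2
  have h4 : μ.card = P μ (μ.colLen 0) := card_eq_P μ le_rfl
  omega

lemma colTab'_bounds (μ : YoungDiagram) :
    ∀ c ∈ μ.cells, 1 ≤ colTab' μ c ∧ colTab' μ c ≤ μ.card := by
  intro c hc
  rw [colTab'_eq]
  have hc' : c.swap ∈ μ.transpose.cells := by
    rw [YoungDiagram.mem_cells, YoungDiagram.mem_transpose]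
    simpa using hc
  have := rowTab'_bounds μ.transpose c.swap hc'
  rw [card_transpose] at this
  exact this

lemma card_colSet (μ : YoungDiagram) (m : ℕ) (hm : m ≤ μ.card) :
    (μ.cells.filter (fun c => colTab' μ c ≤ m)).card = m := by
  rw [← Finset.card_image_of_injective _ Prod.swap_injective, image_swap_colSet]
  exact card_rowSet μ.transpose m (by rwa [card_transpose])
lemma syt_bounds (μ : YoungDiagram) (T : ℕ × ℕ → ℕ) (hT : IsSYT μ T) :
    ∀ c ∈ μ.cells, 1 ≤ T c ∧ T c ≤ μ.card := by
  intro c hc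
  have := hT.1.mapsTo (by simpa using hc)
  simp only [Finset.coe_Icc, Set.mem_Icc] at this
  exact this

lemma syt_closed_l (μ : YoungDiagram) (T : ℕ × ℕ → ℕ) (hT : IsSYT μ T) (m : ℕ) :
    ∀ i j j', (i, j) ∈ μ.cells.filter (fun c => T c ≤ m) → j' ≤ j →
      (i, j') ∈ μ.cells.filter (fun c => T c ≤ m) := by
  intro i j j' h hj'
  rw [mem_filter, YoungDiagram.mem_cells] at h ⊢
  obtain ⟨h1, h2⟩ := h
  have hmem : (i, j') ∈ μ := μ.up_left_mem le_rfl hj' h1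
  refine ⟨hmem, ?_⟩
  rcases eq_or_lt_of_le hj' with rfl | hlt
  · exact h2
  · have := hT.2.1 i j' j hmem h1 hlt
    omega

lemma syt_closed_u (μ : YoungDiagram) (T : ℕ × ℕ → ℕ) (hT : IsSYT μ T) (m : ℕ) :
    ∀ i i' j, (i, j) ∈ μ.cells.filter (fun c => T c ≤ m) → i' ≤ i →
      (i', j) ∈ μ.cells.filter (fun c => T c ≤ m) := by
  intro i i' j h hi'
  rw [mem_filter, YoungDiagram.mem_cells] at h ⊢
  obtain ⟨h1, h2⟩ := h
  have hmem : (i', j) ∈ μ := μ.up_left_mem hi' le_rfl h1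
  refine ⟨hmem, ?_⟩
  rcases eq_or_lt_of_le hi' with rfl | hlt
  · exact h2
  · have := hT.2.2 i' i j hmem h1 hlt
    omega

lemma syt_card_filter (μ : YoungDiagram) (T : ℕ × ℕ → ℕ) (hT : IsSYT μ T)
    (m : ℕ) (hm : m ≤ μ.card) :
    (μ.cells.filter (fun c => T c ≤ m)).card = m := by
  have h : (μ.cells.filter (fun c => T c ≤ m)).card = (Icc 1 m).card := by
    apply Finset.card_bij (fun c _ => T c)
    · intro c hc
      rw [mem_filter] at hc
      have := syt_bounds μ T hT c hc.1
      rw [mem_Icc]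
      exact ⟨this.1, hc.2⟩
    · intro a ha b hb hab
      rw [mem_filter] at ha hb
      exact hT.1.injOn (by simpa using ha.1) (by simpa using hb.1) hab
    · intro k hk
      rw [mem_Icc] at hk
      have hk' : k ∈ (Finset.Icc 1 μ.card : Set ℕ) := by
        simp only [Finset.coe_Icc, Set.mem_Icc]
        omega
      obtain ⟨c, hc, hck⟩ := hT.1.surjOn hk'
      refine ⟨c, ?_, hck⟩
      rw [mem_filter]
      exact ⟨by simpa using hc, by omega⟩
  rw [h, Nat.card_Icc]
  omega

theorem eig_between' (μ : YoungDiagram) (T : ℕ × ℕ → ℕ) (hT : IsSYT μ T) :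
    eig μ (colTab μ) ≤ eig μ T ∧ eig μ T ≤ eig μ (rowTab μ) := by
  have hrow_eq : rowTab μ = rowTab' μ := rfl
  have hcol_eq : colTab μ = colTab' μ := rfl
  have hTb := syt_bounds μ T hT
  have hRb := rowTab'_bounds μ
  have hCb := colTab'_bounds μ
  have hinv : (0 : ℝ) ≤ (μ.card : ℝ)⁻¹ := by positivity
  constructor
  · rw [eig, eig, hcol_eq]
    apply mul_le_mul_of_nonneg_left _ hinv
    rw [decomposition μ T hTb, decomposition μ (colTab' μ) hCb]
    apply Finset.sum_le_sum
    intro m hm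
    rw [mem_Icc] at hm
    apply mul_le_mul_of_nonneg_left _ (w_nonneg μ.card m hm.1)
    exact core_col_min μ m (μ.cells.filter (fun c => T c ≤ m)) hm.2
      (filter_subset _ _) (syt_closed_l μ T hT m) (syt_closed_u μ T hT m)
      (syt_card_filter μ T hT m hm.2)
  · rw [eig, eig, hrow_eq]
    apply mul_le_mul_of_nonneg_left _ hinv
    rw [decomposition μ T hTb, decomposition μ (rowTab' μ) hRb]
    apply Finset.sum_le_sum
    intro m hm
    rw [mem_Icc] at hm
    apply mul_le_mul_of_nonneg_left _ (w_nonneg μ.card m hm.1)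
    exact core_row_max μ m (μ.cells.filter (fun c => T c ≤ m)) hm.2
      (filter_subset _ _) (syt_closed_l μ T hT m) (syt_closed_u μ T hT m)
      (syt_card_filter μ T hT m hm.2)

end EigAux

/-- For every standard Young tableau `T` of shape `λ`,
`eig(T_λ^↓) ≤ eig(T) ≤ eig(T_λ^→)`. -/
theorem eig_between (μ : YoungDiagram) (T : ℕ × ℕ → ℕ) (hT : IsSYT μ T) :
    eig μ (colTab μ) ≤ eig μ T ∧ eig μ T ≤ eig μ (rowTab μ) := by
  exact EigAux.eig_between' μ T hT
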